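/- Let X be an infinite-dimensional complex Banach space, T a bounded linear operator on X, and Γ ⊆ ℂ a nonempty set that is bounded and bounded away from 0 (there exist 0 < a ≤ b with a ≤ |γ| ≤ b for all γ ∈ Γ). If x is Γ-supercyclic for T, then for every n ∈ ℕ and every y ∈ X there exists γ in the closure of Γ such that y belongs to the closure of {γ·T^{n+m} x : m ∈ ℕ}; equivalently, for every n ∈ ℕ, the union over γ ∈ closure(Γ) of the closures of Orb(γ·T^n x, T) equals X. -/
import Mathlib


/-- **Corollary 3.4.** If `Γ ⊆ ℂ` is nonempty, bounded and bounded away from `0` and `x` is a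
`Γ`-supercyclic vector for `T`, then for every `n ≥ 0`,
`⋃_{γ ∈ closure Γ} closure(Orb(γ·T^n x, T)) = X`. -/
theorem gamma_supercyclic_union_closure_orbits
    (X : Type*) [NormedAddCommGroup X] [NormedSpace ℂ X] [CompleteSpace X]
    (hX : ¬FiniteDimensional ℂ X) (T : X →L[ℂ] X) (Γ : Set ℂ)
    (hΓ : ∃ a b : ℝ, 0 < a ∧ a ≤ b ∧ ∀ γ ∈ Γ, a ≤ ‖γ‖ ∧ ‖γ‖ ≤ b)
    (hne : Γ.Nonempty)
    (x : X) (hx : Dense {y : X | ∃ γ ∈ Γ, ∃ n : ℕ, y = γ • (T ^ n) x}) :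
    ∀ n : ℕ, ∀ y : X, ∃ γ ∈ closure Γ,
      y ∈ closure {w : X | ∃ m : ℕ, w = γ • (T ^ (n + m)) x} := by
  obtain ⟨a, b, ha, hab, hbound⟩ := hΓ
  intro n y
  -- the finite-dimensional subspace spanned by the first `n` iterates
  set F : Submodule ℂ X := Submodule.span ℂ ((fun i : ℕ => (T ^ i) x) '' Set.Iio n) with hF
  have hFfin : FiniteDimensional ℂ F :=
    FiniteDimensional.span_of_finite ℂ ((Set.finite_Iio n).image _)
  have hFclosed : IsClosed (F : Set X) := Submodule.closed_of_finiteDimensional F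
  have hFne : F ≠ ⊤ := by
    intro h
    have : FiniteDimensional ℂ (⊤ : Submodule ℂ X) := h ▸ hFfin
    exact hX (Submodule.topEquiv.finiteDimensional)
  have hFint : interior (F : Set X) = ∅ := by
    by_contra h
    exact hFne (Submodule.eq_top_of_nonempty_interior' F
      (Set.nonempty_iff_ne_empty.mpr h))
  have hFcompl : Dense ((F : Set X)ᶜ) := interior_eq_empty_iff_dense_compl.mp hFint
  -- the truncated orbit set is dense
  set D' : Set X := {w : X | ∃ γ ∈ Γ, ∃ m : ℕ, w = γ • (T ^ (n + m)) x} with hD'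
  have hsub : {y : X | ∃ γ ∈ Γ, ∃ n : ℕ, y = γ • (T ^ n) x} ⊆ D' ∪ (F : Set X) := by
    rintro w ⟨γ, hγ, j, rfl⟩
    rcases le_or_gt n j with hj | hj
    · exact Or.inl ⟨γ, hγ, j - n, by rw [Nat.add_sub_cancel' hj]⟩
    · exact Or.inr (F.smul_mem γ (Submodule.subset_span ⟨j, hj, rfl⟩))
  have hD'dense : Dense D' := by
    have h1 : closure {y : X | ∃ γ ∈ Γ, ∃ n : ℕ, y = γ • (T ^ n) x}
        ⊆ closure D' ∪ (F : Set X) := by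
      calc closure {y : X | ∃ γ ∈ Γ, ∃ n : ℕ, y = γ • (T ^ n) x}
          ⊆ closure (D' ∪ (F : Set X)) := closure_mono hsub
        _ = closure D' ∪ closure (F : Set X) := closure_union
        _ = closure D' ∪ (F : Set X) := by rw [hFclosed.closure_eq]
    have h2 : ((F : Set X)ᶜ) ⊆ closure D' := by
      intro z hz
      have : z ∈ closure D' ∪ (F : Set X) := h1 (hx z)
      rcases this with h | h
      · exact h
      · exact absurd h hz
    have : Dense (closure D') := hFcompl.mono h2
    exact this.of_closure
  -- select approximating points
  have hsel : ∀ j : ℕ, ∃ γ ∈ Γ, ∃ m : ℕ,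
      ‖γ • (T ^ (n + m)) x - y‖ < 1 / (j + 1) := by
    intro j
    have hpos : (0 : ℝ) < 1 / (j + 1) := by positivity
    obtain ⟨p, hp, hdist⟩ := Metric.mem_closure_iff.mp (hD'dense y) _ hpos
    obtain ⟨γ, hγ, m, rfl⟩ := hp
    exact ⟨γ, hγ, m, by rwa [dist_eq_norm, norm_sub_rev] at hdist⟩
  choose γs hγs ms hms using hsel
  -- extract a convergent subsequence of the scalars
  have hΓbdd : Bornology.IsBounded Γ :=
    isBounded_iff_forall_norm_le.mpr ⟨b, fun γ hγ => (hbound γ hγ).2⟩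
  obtain ⟨γ, hγcl, φ, hφ, htend⟩ := tendsto_subseq_of_bounded hΓbdd (fun j => hγs j)
  refine ⟨γ, hγcl, ?_⟩
  -- the norms of the iterates are bounded
  set C : ℝ := (‖y‖ + 1) / a with hC
  have hnormle : ∀ j : ℕ, ‖(T ^ (n + ms j)) x‖ ≤ C := by
    intro j
    have h1 : a * ‖(T ^ (n + ms j)) x‖ ≤ ‖γs j • (T ^ (n + ms j)) x‖ := by
      rw [norm_smul]
      exact mul_le_mul_of_nonneg_right (hγs j |> hbound (γs j) |>.1) (norm_nonneg _)
    have h2 : ‖γs j • (T ^ (n + ms j)) x‖ ≤ ‖y‖ + 1 := by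
      calc ‖γs j • (T ^ (n + ms j)) x‖
          ≤ ‖y‖ + ‖γs j • (T ^ (n + ms j)) x - y‖ := norm_le_norm_add_norm_sub' _ _
        _ ≤ ‖y‖ + 1 / (j + 1) := by linarith [hms j]
        _ ≤ ‖y‖ + 1 := by
            have : (1 : ℝ) / (j + 1) ≤ 1 := by
              rw [div_le_one (by positivity)]; linarith [Nat.cast_nonneg (α := ℝ) j]
            linarith
    rw [hC, le_div_iff₀ ha, mul_comm]
    exact le_trans h1 h2
  -- the subsequence converges to y
  refine mem_closure_of_tendsto (f := fun j => γ • (T ^ (n + ms (φ j))) x)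
    (b := Filter.atTop) ?_ ?_
  · rw [tendsto_iff_norm_sub_tendsto_zero]
    have hle : ∀ j : ℕ, ‖γ • (T ^ (n + ms (φ j))) x - y‖
        ≤ ‖γ - γs (φ j)‖ * C + 1 / (φ j + 1) := by
      intro j
      calc ‖γ • (T ^ (n + ms (φ j))) x - y‖
          = ‖(γ - γs (φ j)) • (T ^ (n + ms (φ j))) x
              + (γs (φ j) • (T ^ (n + ms (φ j))) x - y)‖ := by
            congr 1; rw [sub_smul]; abel
        _ ≤ ‖(γ - γs (φ j)) • (T ^ (n + ms (φ j))) x‖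
              + ‖γs (φ j) • (T ^ (n + ms (φ j))) x - y‖ := norm_add_le _ _
        _ ≤ ‖γ - γs (φ j)‖ * C + 1 / (φ j + 1) := by
            apply add_le_add
            · rw [norm_smul]
              exact mul_le_mul_of_nonneg_left (hnormle (φ j)) (norm_nonneg _)
            · exact le_of_lt (hms (φ j))
    have hlim : Filter.Tendsto
        (fun j => ‖γ - γs (φ j)‖ * C + 1 / (φ j + 1 : ℝ)) Filter.atTop (nhds 0) := by
      have l1 : Filter.Tendsto (fun j => ‖γ - γs (φ j)‖ * C) Filter.atTop (nhds 0) := by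
        have : Filter.Tendsto (fun j => ‖γ - γs (φ j)‖) Filter.atTop (nhds 0) := by
          have := htend
          rw [tendsto_iff_norm_sub_tendsto_zero] at this
          simpa [norm_sub_rev] using this
        simpa using this.mul_const C
      have l2 : Filter.Tendsto (fun j => 1 / (φ j + 1 : ℝ)) Filter.atTop (nhds 0) := by
        have h0 : Filter.Tendsto (fun j : ℕ => 1 / (j + 1 : ℝ)) Filter.atTop (nhds 0) :=
          tendsto_one_div_add_atTop_nhds_zero_nat
        exact h0.comp hφ.tendsto_atTop
      simpa using l1.add l2
    exact squeeze_zero (fun j => norm_nonneg _) hle hlim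
  · exact Filter.Eventually.of_forall (fun j => ⟨ms (φ j), rfl⟩)
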